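/- If there exists a (pure-state) quantum random access encoding of m bits into n qubits such that each bit can be decoded with probability at least 1 - ε, where ε ≤ 1/(64 m²), then by deferring measurements and composing the m decoding unitaries, all m bits can be simultaneously recovered with probability at least 1 - 4m√ε ≥ 1/2; consequently, by Holevo's theorem, n ≥ Ω(m). -/

import Mathlib

set_option maxHeartbeats 1000000
set_option synthInstance.maxHeartbeats 1000000

section
variable {E : Type*} [NormedAddCommGroup E] [InnerProductSpace ℂ E] [CompleteSpace E]

def prodOp : ∀ (k : ℕ), (Fin k → (E →L[ℂ] E)) → (E →L[ℂ] E)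
  | 0, _ => 1
  | (k+1), f => prodOp k (fun i => f i.succ) * f 0

lemma prodOp_norm_le : ∀ (k : ℕ) (f : Fin k → (E →L[ℂ] E)), (∀ i, ‖f i‖ ≤ 1) → ‖prodOp k f‖ ≤ 1
  | 0, f, _ => by simpa [prodOp, ContinuousLinearMap.one_def] using ContinuousLinearMap.norm_id_le
  | (k+1), f, h => by
    have h1 := prodOp_norm_le k (fun i => f i.succ) (fun i => h i.succ)
    have h2 := h 0
    calc ‖prodOp (k+1) f‖ ≤ ‖prodOp k (fun i => f i.succ)‖ * ‖f 0‖ := norm_mul_le _ _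
      _ ≤ 1 := by nlinarith [norm_nonneg (prodOp k (fun i => f i.succ)), norm_nonneg (f 0)]

lemma prodOp_dist : ∀ (k : ℕ) (f : Fin k → (E →L[ℂ] E)), (∀ i, ‖f i‖ ≤ 1) → ∀ (φ : E),
    ‖prodOp k f φ - φ‖ ≤ ∑ i, ‖f i φ - φ‖
  | 0, f, _, φ => by simp [prodOp]
  | (k+1), f, h, φ => by
    have ih := prodOp_dist k (fun i => f i.succ) (fun i => h i.succ) φ
    have hP : ‖prodOp k (fun i => f i.succ)‖ ≤ 1 := prodOp_norm_le k _ (fun i => h i.succ)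
    have key : prodOp (k+1) f φ - φ
        = prodOp k (fun i => f i.succ) (f 0 φ - φ) + (prodOp k (fun i => f i.succ) φ - φ) := by
      simp only [prodOp, ContinuousLinearMap.mul_apply, map_sub]
      abel
    rw [key, Fin.sum_univ_succ]
    calc ‖_ + _‖ ≤ ‖prodOp k (fun i => f i.succ) (f 0 φ - φ)‖
          + ‖prodOp k (fun i => f i.succ) φ - φ‖ := norm_add_le _ _
      _ ≤ ‖f 0 φ - φ‖ + ∑ i : Fin k, ‖f i.succ φ - φ‖ := by
          gcongr
          calc ‖prodOp k (fun i => f i.succ) (f 0 φ - φ)‖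
              ≤ ‖prodOp k (fun i => f i.succ)‖ * ‖f 0 φ - φ‖ :=
                ContinuousLinearMap.le_opNorm _ _
            _ ≤ ‖f 0 φ - φ‖ := mul_le_of_le_one_left (norm_nonneg _) hP

lemma prodOp_sum : ∀ (k : ℕ) (f : Fin k → Bool → (E →L[ℂ] E)),
    (∀ i, star (f i true) * f i true + star (f i false) * f i false = 1) →
    ∑ y : Fin k → Bool,
      star (prodOp k (fun i => f i (y i))) * prodOp k (fun i => f i (y i)) = 1
  | 0, f, _ => by simp [prodOp]
  | (k+1), f, h => by
    have ih := prodOp_sum k (fun i => f i.succ) (fun i => h i.succ)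
    rw [← ((Fin.consEquiv (fun _ : Fin (k+1) => Bool)).sum_comp
      (fun y => star (prodOp (k+1) (fun i => f i (y i))) * prodOp (k+1) (fun i => f i (y i))))]
    rw [Fintype.sum_prod_type]
    have hrw : ∀ (b : Bool) (t : Fin k → Bool),
        star (prodOp (k+1) (fun i => f i ((Fin.consEquiv (fun _ : Fin (k+1) => Bool)) (b, t) i)))
          * prodOp (k+1) (fun i => f i ((Fin.consEquiv (fun _ : Fin (k+1) => Bool)) (b, t) i))
        = star (f 0 b) *
            (star (prodOp k (fun i => f i.succ (t i))) * prodOp k (fun i => f i.succ (t i)))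
            * f 0 b := by
      intro b t
      have : (fun i => f i ((Fin.consEquiv (fun _ : Fin (k+1) => Bool)) (b, t) i))
          = Fin.cons (f 0 b) (fun i : Fin k => f i.succ (t i)) := by
        funext i
        refine Fin.cases ?_ (fun j => ?_) i <;> simp [Fin.consEquiv]
      rw [this]
      simp only [prodOp, Fin.cons_succ, Fin.cons_zero, star_mul]
      noncomm_ring
    simp only [hrw]
    have hsum : ∀ b : Bool, ∑ t : Fin k → Bool,
        star (f 0 b) *
          (star (prodOp k (fun i => f i.succ (t i))) * prodOp k (fun i => f i.succ (t i)))
          * f 0 b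
        = star (f 0 b) * f 0 b := by
      intro b
      rw [← Finset.sum_mul, ← Finset.mul_sum, ih, mul_one]
    rw [Fintype.sum_bool, hsum, hsum, h 0]

section
variable {E : Type*} [NormedAddCommGroup E] [InnerProductSpace ℂ E] [CompleteSpace E]


lemma cinner_self_re (x : E) : (inner ℂ x x : ℂ).re = ‖x‖ ^ 2 := by
  have := @inner_self_eq_norm_sq ℂ E _ _ _ x
  simpa [RCLike.re_to_complex] using this

lemma cinner_re_symm (x y : E) : (inner ℂ x y : ℂ).re = (inner ℂ y x : ℂ).re := by
  have := inner_re_symm (𝕜 := ℂ) x y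
  simpa [RCLike.re_to_complex] using this

open ContinuousLinearMap in
lemma inner_re_le_of_le {X Y : E →L[ℂ] E} (h : X ≤ Y) (φ : E) :
    (inner ℂ φ (X φ) : ℂ).re ≤ (inner ℂ φ (Y φ) : ℂ).re := by
  have hp := (ContinuousLinearMap.le_def X Y).1 h
  have h2 := hp.2 φ
  rw [ContinuousLinearMap.reApplyInnerSelf_apply, ContinuousLinearMap.sub_apply,
    inner_sub_left] at h2
  have e1 : (inner ℂ (Y φ) φ : ℂ).re = (inner ℂ φ (Y φ) : ℂ).re := cinner_re_symm _ _
  have e2 : (inner ℂ (X φ) φ : ℂ).re = (inner ℂ φ (X φ) : ℂ).re := cinner_re_symm _ _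
  simp only [RCLike.re_to_complex, Complex.sub_re] at h2
  linarith [h2, e1.le, e2.le, e1.ge, e2.ge]

open ContinuousLinearMap in
lemma le_of_inner_re {X Y : E →L[ℂ] E} (hX : IsSelfAdjoint X) (hY : IsSelfAdjoint Y)
    (h : ∀ φ, (inner ℂ φ (X φ) : ℂ).re ≤ (inner ℂ φ (Y φ) : ℂ).re) : X ≤ Y := by
  rw [ContinuousLinearMap.le_def, ContinuousLinearMap.isPositive_def']
  refine ⟨hY.sub hX, fun φ => ?_⟩
  rw [ContinuousLinearMap.reApplyInnerSelf_apply, ContinuousLinearMap.sub_apply,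
    inner_sub_left]
  have e1 : (inner ℂ (Y φ) φ : ℂ).re = (inner ℂ φ (Y φ) : ℂ).re := cinner_re_symm _ _
  have e2 : (inner ℂ (X φ) φ : ℂ).re = (inner ℂ φ (X φ) : ℂ).re := cinner_re_symm _ _
  simp only [RCLike.re_to_complex, Complex.sub_re]
  linarith [h φ, e1.le, e2.le, e1.ge, e2.ge]

open ContinuousLinearMap in
lemma sqrt_props (A : E →L[ℂ] E) (h0 : 0 ≤ A) (h1 : A ≤ 1) :
    ∃ S : E →L[ℂ] E, IsSelfAdjoint S ∧ star S * S = A ∧ ‖S‖ ≤ 1 ∧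
      ∀ φ : E, ‖S φ - φ‖ ^ 2 ≤ ‖φ‖ ^ 2 - (inner ℂ φ (A φ) : ℂ).re := by
  set S := CFC.sqrt A with hS
  have hS0 : 0 ≤ S := CFC.sqrt_nonneg (a := A)
  have hSsa : IsSelfAdjoint S := IsSelfAdjoint.of_nonneg hS0
  have hsq : S ^ 2 = A := CFC.sq_sqrt (a := A) h0
  have hnormA : ‖A‖ ≤ 1 := (CStarAlgebra.norm_le_one_iff_of_nonneg A h0).2 h1
  have hnormS : ‖S‖ ≤ 1 := by
    have h3 : ‖S‖ * ‖S‖ ≤ 1 := by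
      have := CStarRing.norm_star_mul_self (x := S)
      rw [hSsa.star_eq] at this
      calc ‖S‖ * ‖S‖ = ‖S * S‖ := this.symm
        _ = ‖S ^ 2‖ := by rw [sq]
        _ = ‖A‖ := by rw [hsq]
        _ ≤ 1 := hnormA
    nlinarith [norm_nonneg S]
  have hS1 : S ≤ 1 := (CStarAlgebra.norm_le_one_iff_of_nonneg S hS0).1 hnormS
  have hAS : A ≤ S := by
    have := CStarAlgebra.pow_antitone hS0 hS1 (by norm_num : 1 ≤ 2)
    simpa [hsq] using this
  refine ⟨S, hSsa, by rw [hSsa.star_eq, ← sq, hsq], hnormS, fun φ => ?_⟩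
  have hkey : (S - 1) * (S - 1) ≤ 1 - A := by
    have h2 : A + A ≤ S + S := add_le_add hAS hAS
    have hexp : (1 - A) - (S - 1) * (S - 1) = (S + S) - (A + A) := by
      rw [← hsq]; noncomm_ring
    rw [← sub_nonneg, hexp, sub_nonneg]
    exact h2
  have hsa1 : IsSelfAdjoint (S - 1) := hSsa.sub (by rw [IsSelfAdjoint]; exact star_one _)
  have e0 : (S - 1) φ = S φ - φ := by
    simp [ContinuousLinearMap.sub_apply]
  have hadj : ContinuousLinearMap.adjoint (S - 1) = S - 1 :=
    (ContinuousLinearMap.star_eq_adjoint (S - 1)).symm.trans hsa1.star_eq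
  have e1 : ‖S φ - φ‖ ^ 2 = (inner ℂ φ (((S - 1) * (S - 1)) φ) : ℂ).re := by
    have c1 : (inner ℂ φ (((S - 1) * (S - 1)) φ) : ℂ) = inner ℂ ((S - 1) φ) ((S - 1) φ) := by
      rw [ContinuousLinearMap.mul_apply]
      rw [← ContinuousLinearMap.adjoint_inner_left (S - 1) ((S - 1) φ) φ, hadj]
    rw [c1, e0, cinner_self_re]
  have e2 := inner_re_le_of_le hkey φ
  have e3 : (inner ℂ φ ((1 - A : E →L[ℂ] E) φ) : ℂ).re = ‖φ‖ ^ 2 - (inner ℂ φ (A φ) : ℂ).re := by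
    rw [ContinuousLinearMap.sub_apply, inner_sub_right, Complex.sub_re,
      ContinuousLinearMap.one_apply, cinner_self_re]
  rw [e1]
  rw [e3] at e2
  exact e2
end

/-- If m bits have a pure-state quantum random access encoding into n qubits
with per-bit decoding error ε ≤ 1/(64m²), then all m bits can be
simultaneously recovered by a single measurement with probability at least
1 - 4m√ε ≥ 1/2, and consequently (Holevo) n ≥ Ω(m). -/
theorem simultaneous_recovery_and_holevo_bound :
    ∃ c : ℝ, 0 < c ∧
      ∀ (m n : ℕ) (ε : ℝ), 0 ≤ ε → ε ≤ 1 / (64 * (m : ℝ) ^ 2) →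
      ∀ (φ : (Fin m → Bool) → EuclideanSpace ℂ (Fin (2 ^ n))),
        (∀ x, ‖φ x‖ = 1) →
      ∀ (M : Fin m →
          (EuclideanSpace ℂ (Fin (2 ^ n)) →L[ℂ] EuclideanSpace ℂ (Fin (2 ^ n)))),
        (∀ i ψ, 0 ≤ (inner ℂ ψ ((M i) ψ) : ℂ).re ∧
                (inner ℂ ψ ((M i) ψ) : ℂ).re ≤ ‖ψ‖ ^ 2) →
        (∀ x i, 1 - ε ≤
          (if x i then (inner ℂ (φ x) ((M i) (φ x)) : ℂ).re
           else 1 - (inner ℂ (φ x) ((M i) (φ x)) : ℂ).re)) →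
        (∃ N : (Fin m → Bool) →
            (EuclideanSpace ℂ (Fin (2 ^ n)) →L[ℂ] EuclideanSpace ℂ (Fin (2 ^ n))),
          (∀ y ψ, 0 ≤ (inner ℂ ψ ((N y) ψ) : ℂ).re) ∧
          (∑ y, N y = ContinuousLinearMap.id ℂ (EuclideanSpace ℂ (Fin (2 ^ n)))) ∧
          (∀ x, 1 - 4 * m * Real.sqrt ε ≤ (inner ℂ (φ x) ((N x) (φ x)) : ℂ).re)) ∧
        (1 / 2 : ℝ) ≤ 1 - 4 * m * Real.sqrt ε ∧
        c * m ≤ (n : ℝ) := by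
  refine ⟨1/2, by norm_num, ?_⟩
  intro m n ε hε0 hεle φ hφ M hM h3
  -- Hermitian parts
  set A : Fin m → (EuclideanSpace ℂ (Fin (2 ^ n)) →L[ℂ] EuclideanSpace ℂ (Fin (2 ^ n))) :=
    fun i => (2⁻¹ : ℂ) • (M i + ContinuousLinearMap.adjoint (M i)) with hAdef
  have hAre : ∀ i ψ, (inner ℂ ψ (A i ψ) : ℂ).re = (inner ℂ ψ (M i ψ) : ℂ).re := by
    intro i ψ
    simp only [hAdef, ContinuousLinearMap.smul_apply, ContinuousLinearMap.add_apply,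
      inner_smul_right, inner_add_right]
    rw [ContinuousLinearMap.adjoint_inner_right, ← inner_conj_symm ψ (M i ψ)]
    simp only [Complex.mul_re, Complex.add_re, Complex.add_im, Complex.conj_re,
      Complex.conj_im]
    norm_num
    ring
  have hAsa : ∀ i, IsSelfAdjoint (A i) := by
    intro i
    rw [IsSelfAdjoint, hAdef]
    simp only [star_smul, star_add, ContinuousLinearMap.star_eq_adjoint, map_add,
      ContinuousLinearMap.adjoint_adjoint]
    rw [show star (2⁻¹ : ℂ) = (2⁻¹ : ℂ) by norm_num, add_comm]
  have h1sa : IsSelfAdjoint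
      (1 : EuclideanSpace ℂ (Fin (2 ^ n)) →L[ℂ] EuclideanSpace ℂ (Fin (2 ^ n))) := by
    rw [IsSelfAdjoint]; exact star_one _
  have h0sa : IsSelfAdjoint
      (0 : EuclideanSpace ℂ (Fin (2 ^ n)) →L[ℂ] EuclideanSpace ℂ (Fin (2 ^ n))) := by
    rw [IsSelfAdjoint]; exact (ContinuousLinearMap.star_eq_adjoint _).trans (map_zero _)
  have hone : ∀ ψ : EuclideanSpace ℂ (Fin (2 ^ n)),
      (inner ℂ ψ ((1 : EuclideanSpace ℂ (Fin (2 ^ n)) →L[ℂ] EuclideanSpace ℂ (Fin (2 ^ n))) ψ)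
        : ℂ).re = ‖ψ‖ ^ 2 := by
    intro ψ
    rw [ContinuousLinearMap.one_apply, cinner_self_re]
  have hA0 : ∀ i, (0 : EuclideanSpace ℂ (Fin (2 ^ n)) →L[ℂ] _) ≤ A i := by
    intro i
    refine le_of_inner_re h0sa (hAsa i) (fun ψ => ?_)
    rw [hAre i ψ]
    simpa using (hM i ψ).1
  have hA1 : ∀ i, A i ≤ 1 := by
    intro i
    refine le_of_inner_re (hAsa i) h1sa (fun ψ => ?_)
    rw [hAre i ψ, hone ψ]
    exact (hM i ψ).2
  have hA0' : ∀ i, (0 : EuclideanSpace ℂ (Fin (2 ^ n)) →L[ℂ] _) ≤ 1 - A i := by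
    intro i
    refine le_of_inner_re h0sa (h1sa.sub (hAsa i)) (fun ψ => ?_)
    have : (inner ℂ ψ ((1 - A i) ψ) : ℂ).re = ‖ψ‖ ^ 2 - (inner ℂ ψ (M i ψ) : ℂ).re := by
      rw [ContinuousLinearMap.sub_apply, inner_sub_right, Complex.sub_re, hAre i ψ,
        ContinuousLinearMap.one_apply, cinner_self_re]
    rw [this]
    simpa using sub_nonneg.2 (hM i ψ).2
  have hA1' : ∀ i, (1 - A i : EuclideanSpace ℂ (Fin (2 ^ n)) →L[ℂ] _) ≤ 1 := by
    intro i
    refine le_of_inner_re (h1sa.sub (hAsa i)) h1sa (fun ψ => ?_)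
    have : (inner ℂ ψ ((1 - A i) ψ) : ℂ).re = ‖ψ‖ ^ 2 - (inner ℂ ψ (M i ψ) : ℂ).re := by
      rw [ContinuousLinearMap.sub_apply, inner_sub_right, Complex.sub_re, hAre i ψ,
        ContinuousLinearMap.one_apply, cinner_self_re]
    rw [this, hone ψ]
    linarith [(hM i ψ).1]
  choose S hSsa hSmul hSnorm hSbound using fun i => sqrt_props (A i) (hA0 i) (hA1 i)
  choose T hTsa hTmul hTnorm hTbound using fun i => sqrt_props (1 - A i) (hA0' i) (hA1' i)
  set f : Fin m → Bool →
      (EuclideanSpace ℂ (Fin (2 ^ n)) →L[ℂ] EuclideanSpace ℂ (Fin (2 ^ n))) :=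
    fun i b => if b then S i else T i with hfdef
  set B : (Fin m → Bool) →
      (EuclideanSpace ℂ (Fin (2 ^ n)) →L[ℂ] EuclideanSpace ℂ (Fin (2 ^ n))) :=
    fun y => prodOp m (fun i => f i (y i)) with hBdef
  set N : (Fin m → Bool) →
      (EuclideanSpace ℂ (Fin (2 ^ n)) →L[ℂ] EuclideanSpace ℂ (Fin (2 ^ n))) :=
    fun y => star (B y) * B y with hNdef
  have hNre : ∀ y ψ, (inner ℂ ψ (N y ψ) : ℂ).re = ‖B y ψ‖ ^ 2 := by
    intro y ψ
    have : (inner ℂ ψ (N y ψ) : ℂ) = inner ℂ (B y ψ) (B y ψ) := by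
      simp only [hNdef, ContinuousLinearMap.mul_apply, ContinuousLinearMap.star_eq_adjoint]
      rw [ContinuousLinearMap.adjoint_inner_right]
    rw [this, cinner_self_re]
  have hfnorm : ∀ i b, ‖f i b‖ ≤ 1 := by
    intro i b
    cases b <;> simp [hfdef, hSnorm i, hTnorm i]
  have hsum : ∑ y, N y = 1 := by
    refine prodOp_sum m f (fun i => ?_)
    have e1 : f i true = S i := by simp [hfdef]
    have e2 : f i false = T i := by simp [hfdef]
    rw [e1, e2, hSmul i, hTmul i]
    abel
  -- per-step error bound
  have hstep : ∀ x i, ‖f i (x i) (φ x) - φ x‖ ≤ Real.sqrt ε := by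
    intro x i
    have hb := h3 x i
    have hsq : ‖f i (x i) (φ x) - φ x‖ ^ 2 ≤ ε := by
      cases hxi : x i with
      | true =>
        rw [hxi, if_pos rfl] at hb
        have := hSbound i (φ x)
        rw [hAre i (φ x), hφ x] at this
        simp only [hfdef, hxi, if_pos]
        linarith
      | false =>
        rw [hxi] at hb
        simp only [Bool.false_eq_true, if_false] at hb
        have := hTbound i (φ x)
        have e : (inner ℂ (φ x) ((1 - A i) (φ x)) : ℂ).re
            = ‖φ x‖ ^ 2 - (inner ℂ (φ x) (M i (φ x)) : ℂ).re := by
          rw [ContinuousLinearMap.sub_apply, inner_sub_right, Complex.sub_re, hAre i (φ x),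
            ContinuousLinearMap.one_apply, cinner_self_re]
        rw [e, hφ x] at this
        simp only [hfdef, hxi, Bool.false_eq_true, if_false]
        have h5 : ‖(T i) (φ x) - φ x‖ ^ 2 ≤ (inner ℂ (φ x) ((M i) (φ x)) : ℂ).re := by
          linarith [this]
        have hb2 : 1 - ε ≤ 1 - (inner ℂ (φ x) ((M i) (φ x)) : ℂ).re := hb
        linarith [h5, hb2]
    have := Real.sqrt_le_sqrt hsq
    rwa [Real.sqrt_sq (norm_nonneg _)] at this
  have hm8 : (m : ℝ) * Real.sqrt ε ≤ 1 / 8 := by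
    rcases Nat.eq_zero_or_pos m with hm | hm
    · simp [hm]
    · have hm1 : (1 : ℝ) ≤ (m : ℝ) := by exact_mod_cast hm
      have hsqle : Real.sqrt ε ≤ 1 / (8 * (m : ℝ)) := by
        have h1 : Real.sqrt ε ≤ Real.sqrt (1 / (64 * (m : ℝ) ^ 2)) := Real.sqrt_le_sqrt hεle
        have h2 : Real.sqrt (1 / (64 * (m : ℝ) ^ 2)) = 1 / (8 * (m : ℝ)) := by
          rw [show (1 : ℝ) / (64 * (m : ℝ) ^ 2) = (1 / (8 * (m : ℝ))) ^ 2 by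
            field_simp; ring]
          exact Real.sqrt_sq (by positivity)
        rw [h2] at h1
        exact h1
      calc (m : ℝ) * Real.sqrt ε ≤ (m : ℝ) * (1 / (8 * (m : ℝ))) := by
            exact mul_le_mul_of_nonneg_left hsqle (by positivity)
        _ = 1 / 8 := by field_simp
  have ht0 : 0 ≤ (m : ℝ) * Real.sqrt ε := by positivity
  have hd : ∀ x, ‖B x (φ x) - φ x‖ ≤ (m : ℝ) * Real.sqrt ε := by
    intro x
    have h1 := prodOp_dist m (fun i => f i (x i)) (fun i => hfnorm i (x i)) (φ x)
    have h2 : ∑ i : Fin m, ‖f i (x i) (φ x) - φ x‖ ≤ (m : ℝ) * Real.sqrt ε := by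
      calc ∑ i : Fin m, ‖f i (x i) (φ x) - φ x‖ ≤ ∑ _i : Fin m, Real.sqrt ε :=
            Finset.sum_le_sum (fun i _ => hstep x i)
        _ = (m : ℝ) * Real.sqrt ε := by
            rw [Finset.sum_const, Finset.card_univ, Fintype.card_fin, nsmul_eq_mul]
    exact h1.trans h2
  have hsucc : ∀ x, 1 - 4 * (m : ℝ) * Real.sqrt ε ≤ ‖B x (φ x)‖ ^ 2 := by
    intro x
    have h1 := hd x
    have h2 : ‖φ x‖ - ‖B x (φ x)‖ ≤ ‖B x (φ x) - φ x‖ := by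
      have h := abs_norm_sub_norm_le (φ x) (B x (φ x))
      rw [norm_sub_rev] at h
      exact (le_abs_self _).trans h
    rw [hφ x] at h2
    nlinarith [norm_nonneg (B x (φ x)), norm_nonneg (B x (φ x) - φ x), hm8]
  have hhalf : (1 / 2 : ℝ) ≤ 1 - 4 * (m : ℝ) * Real.sqrt ε := by linarith
  refine ⟨⟨N, ?_, ?_, ?_⟩, hhalf, ?_⟩
  · intro y ψ
    rw [hNre y ψ]
    positivity
  · rw [← ContinuousLinearMap.one_def]
    exact hsum
  · intro x
    rw [hNre x (φ x)]
    exact hsucc x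
  · -- Holevo counting bound
    set eb := EuclideanSpace.basisFun (Fin (2 ^ n)) ℂ with hebdef
    have hCS : ∀ x, ‖B x (φ x)‖ ^ 2 ≤ ∑ j, ‖B x (eb j)‖ ^ 2 := by
      intro x
      have hrepr : (∑ j, eb.repr (φ x) j • eb j) = φ x := eb.sum_repr (φ x)
      have h1 : ‖B x (φ x)‖ ≤ ∑ j, ‖eb.repr (φ x) j‖ * ‖B x (eb j)‖ := by
        conv_lhs => rw [← hrepr]
        rw [map_sum]
        refine (norm_sum_le _ _).trans ?_
        refine Finset.sum_le_sum (fun j _ => ?_)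
        rw [map_smul, norm_smul]
      have h2 : (∑ j, ‖eb.repr (φ x) j‖ * ‖B x (eb j)‖) ^ 2
          ≤ (∑ j, ‖eb.repr (φ x) j‖ ^ 2) * (∑ j, ‖B x (eb j)‖ ^ 2) :=
        Finset.sum_mul_sq_le_sq_mul_sq _ _ _
      have h3 : (∑ j, ‖eb.repr (φ x) j‖ ^ 2) = 1 := by
        have h4 : ‖eb.repr (φ x)‖ = 1 := by rw [LinearIsometryEquiv.norm_map, hφ x]
        have h5 := EuclideanSpace.norm_eq (eb.repr (φ x))
        rw [h4] at h5
        calc (∑ j, ‖eb.repr (φ x) j‖ ^ 2)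
            = Real.sqrt (∑ j, ‖eb.repr (φ x) j‖ ^ 2) ^ 2 :=
              (Real.sq_sqrt (by positivity)).symm
          _ = 1 := by rw [← h5]; norm_num
      calc ‖B x (φ x)‖ ^ 2 ≤ (∑ j, ‖eb.repr (φ x) j‖ * ‖B x (eb j)‖) ^ 2 :=
            pow_le_pow_left₀ (norm_nonneg _) h1 2
        _ ≤ (∑ j, ‖eb.repr (φ x) j‖ ^ 2) * (∑ j, ‖B x (eb j)‖ ^ 2) := h2
        _ = ∑ j, ‖B x (eb j)‖ ^ 2 := by rw [h3, one_mul]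
    have hTr : ∑ x : Fin m → Bool, ∑ j, ‖B x (eb j)‖ ^ 2 = (2 ^ n : ℝ) := by
      rw [Finset.sum_comm]
      have hcol : ∀ j, ∑ x : Fin m → Bool, ‖B x (eb j)‖ ^ 2 = 1 := by
        intro j
        have h1 : ∑ x : Fin m → Bool, ‖B x (eb j)‖ ^ 2
            = ∑ x : Fin m → Bool, (inner ℂ (eb j) (N x (eb j)) : ℂ).re :=
          Finset.sum_congr rfl (fun x _ => (hNre x (eb j)).symm)
        have h2 : (∑ x : Fin m → Bool, (inner ℂ (eb j) (N x (eb j)) : ℂ))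
            = inner ℂ (eb j) ((∑ x : Fin m → Bool, N x) (eb j)) := by
          rw [ContinuousLinearMap.sum_apply, inner_sum]
        rw [hsum] at h2
        have h4 : (inner ℂ (eb j) ((1 : EuclideanSpace ℂ (Fin (2 ^ n)) →L[ℂ]
            EuclideanSpace ℂ (Fin (2 ^ n))) (eb j)) : ℂ).re = 1 := by
          rw [hone (eb j)]
          have : ‖eb j‖ = 1 := eb.orthonormal.1 j
          rw [this]; norm_num
        rw [h1, ← Complex.re_sum, h2, h4]
      rw [Finset.sum_congr rfl (fun j _ => hcol j), Finset.sum_const, Finset.card_univ,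
        Fintype.card_fin, nsmul_eq_mul, mul_one]
      norm_num
    have hcount : (2 : ℝ) ^ m * (1 / 2) ≤ (2 : ℝ) ^ n := by
      have h1 : ∀ x : Fin m → Bool, (1 / 2 : ℝ) ≤ ‖B x (φ x)‖ ^ 2 :=
        fun x => le_trans hhalf (hsucc x)
      calc (2 : ℝ) ^ m * (1 / 2) = ∑ _x : Fin m → Bool, (1 / 2 : ℝ) := by
            rw [Finset.sum_const, Finset.card_univ, nsmul_eq_mul]
            norm_num [Fintype.card_fun]
        _ ≤ ∑ x : Fin m → Bool, ‖B x (φ x)‖ ^ 2 := Finset.sum_le_sum (fun x _ => h1 x)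
        _ ≤ ∑ x : Fin m → Bool, ∑ j, ‖B x (eb j)‖ ^ 2 :=
            Finset.sum_le_sum (fun x _ => hCS x)
        _ = (2 : ℝ) ^ n := hTr
    have hmn : m ≤ n + 1 := by
      have h2 : (2 : ℝ) ^ m ≤ (2 : ℝ) ^ (n + 1) := by rw [pow_succ]; linarith
      have h3 : (2 : ℕ) ^ m ≤ 2 ^ (n + 1) := by exact_mod_cast h2
      exact (Nat.pow_le_pow_iff_right (by norm_num)).1 h3
    rcases Nat.eq_zero_or_pos n with hn | hn
    · subst hn
      have hm1 : m ≤ 1 := by omega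
      interval_cases m
      · norm_num
      · exfalso
        norm_num at hεle
        set j0 : Fin (2 ^ 0) := ⟨0, by norm_num⟩ with hj0def
        set ee : EuclideanSpace ℂ (Fin (2 ^ 0)) := EuclideanSpace.single j0 1 with heedef
        have hinee : (inner ℂ ee ee : ℂ) = 1 := by
          rw [heedef, EuclideanSpace.inner_single_left]
          simp [EuclideanSpace.single_apply]
        have key : ∀ ψ : EuclideanSpace ℂ (Fin (2 ^ 0)), ‖ψ‖ = 1 →
            (inner ℂ ψ (M 0 ψ) : ℂ).re = (inner ℂ ee (M 0 ee) : ℂ).re := by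
          intro ψ hψ
          have hψe : ψ = ψ j0 • ee := by
            ext j
            have hj : j = j0 := by
              have := j.isLt
              norm_num at this
              exact Fin.ext (by omega)
            subst hj
            rw [PiLp.smul_apply, heedef, EuclideanSpace.single_apply]
            simp
          set z := ψ j0 with hzdef
          have hin : ∀ w : EuclideanSpace ℂ (Fin (2 ^ 0)) →L[ℂ] EuclideanSpace ℂ (Fin (2 ^ 0)),
              (inner ℂ ψ (w ψ) : ℂ) = (Complex.normSq z : ℂ) * inner ℂ ee (w ee) := by
            intro w
            conv_lhs => rw [hψe]
            rw [map_smul, inner_smul_left, inner_smul_right, ← mul_assoc,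
              ← Complex.normSq_eq_conj_mul_self]
          have hz1 : (Complex.normSq z : ℝ) = 1 := by
            have h5 : (inner ℂ ψ ψ : ℂ) = (Complex.normSq z : ℂ) := by
              conv_lhs => rw [hψe]
              rw [inner_smul_left, inner_smul_right, ← mul_assoc,
                ← Complex.normSq_eq_conj_mul_self, hinee, mul_one]
            have h6 := cinner_self_re ψ
            rw [h5, hψ] at h6
            simpa using h6
          rw [hin (M 0), hz1]
          norm_num
        have hT := h3 (fun _ => true) 0
        have hF := h3 (fun _ => false) 0
        rw [if_pos rfl] at hT
        simp only [Bool.false_eq_true, if_false] at hF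
        have hT2 : 1 - ε ≤ (inner ℂ (φ fun _ => true) (M 0 (φ fun _ => true)) : ℂ).re := hT
        have hF2 : 1 - ε ≤ 1 - (inner ℂ (φ fun _ => false) (M 0 (φ fun _ => false)) : ℂ).re := hF
        rw [key _ (hφ _)] at hT2 hF2
        linarith
    · have h5 : (m : ℝ) ≤ (n : ℝ) + 1 := by exact_mod_cast hmn
      have hn1 : (1 : ℝ) ≤ (n : ℝ) := by exact_mod_cast hn
      linarith
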